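/- Fix a primitive vector u ∈ ℤ². (i) For all nonempty compact convex sets K, L ⊆ ℝ², if w_u(K) = w_u(L) = 0 then V(K,L) = 0. (ii) For every triple (w₁, v, w₂) ∈ ℝ≥0³ with w₁ + w₂ > 0, there exist nonempty compact convex sets K, L ⊆ ℝ² (which can be taken to be line segments) such that w_u(K) = w₁, V(K,L) = v, and w_u(L) = w₂. -/

import Mathlib

open MeasureTheory Pointwise

/-- Normalized mixed area of two compact convex sets in ℝ². -/
noncomputable def mixedArea (K L : Set (ℝ × ℝ)) : ℝ :=
  (volume (K + L)).toReal - (volume K).toReal - (volume L).toReal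

/-- The width of a set `K ⊆ ℝ²` in the direction `u ∈ ℤ²`. -/
noncomputable def latticeWidth (u : ℤ × ℤ) (K : Set (ℝ × ℝ)) : ℝ :=
  sSup ((fun x : ℝ × ℝ => x.1 * u.1 + x.2 * u.2) '' K) -
    sInf ((fun x : ℝ × ℝ => x.1 * u.1 + x.2 * u.2) '' K)

/-- The linear functional `x ↦ ⟨x, u⟩` on `ℝ²`. -/
noncomputable def ContDiagAux.phi (u : ℤ × ℤ) : (ℝ × ℝ) →ₗ[ℝ] ℝ where
  toFun x := x.1 * u.1 + x.2 * u.2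
  map_add' x y := by simp; ring
  map_smul' c x := by simp; ring

namespace ContDiagAux

lemma phi_cont (u : ℤ × ℤ) :
    Continuous (fun x : ℝ × ℝ => x.1 * u.1 + x.2 * u.2) := by fun_prop

/-- The level set of `phi u` at value `c` as an affine subspace. -/
noncomputable def lineAS (u : ℤ × ℤ) (c : ℝ) : AffineSubspace ℝ (ℝ × ℝ) where
  carrier := {x | phi u x = c}
  smul_vsub_vadd_mem' t p₁ p₂ p₃ h1 h2 h3 := by
    simp only [Set.mem_setOf_eq] at *
    rw [vsub_eq_sub, vadd_eq_add, LinearMap.map_add, LinearMap.map_smul, LinearMap.map_sub,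
      h1, h2, h3]
    simp

lemma seg_compact (p q : ℝ × ℝ) : IsCompact (segment ℝ p q) := by
  rw [segment_eq_image]
  exact isCompact_Icc.image (by fun_prop)

lemma line_null (u : ℤ × ℤ) (hu : Int.gcd u.1 u.2 = 1) (c : ℝ) :
    volume {x : ℝ × ℝ | x.1 * u.1 + x.2 * u.2 = c} = 0 := by
  have huz : ¬((u.1 : ℝ) = 0 ∧ (u.2 : ℝ) = 0) := by
    rintro ⟨h1, h2⟩
    rw [Int.cast_eq_zero] at h1 h2
    rw [h1, h2] at hu
    simp at hu
  have hN : (0 : ℝ) < (u.1 : ℝ) ^ 2 + (u.2 : ℝ) ^ 2 := by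
    rcases not_and_or.mp huz with h | h <;> positivity
  set N : ℝ := (u.1 : ℝ) ^ 2 + (u.2 : ℝ) ^ 2 with hNdef
  have hline : {x : ℝ × ℝ | x.1 * u.1 + x.2 * u.2 = c} = (lineAS u c : Set (ℝ × ℝ)) := rfl
  rw [hline]
  refine Measure.addHaar_affineSubspace _ _ ?_
  intro htop
  have hmem : ((c + 1) * u.1 / N, (c + 1) * u.2 / N) ∈ lineAS u c := by
    rw [htop]; trivial
  have : ((c + 1) * u.1 / N) * u.1 + ((c + 1) * u.2 / N) * u.2 = c := hmem
  have h4 : (c + 1) * N = c * N := by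
    field_simp at this
    rw [hNdef]; linear_combination this
  have hc : c + 1 = c := mul_right_cancel₀ (ne_of_gt hN) h4
  linarith

lemma width_zero_subset {u : ℤ × ℤ} {K : Set (ℝ × ℝ)} (hKne : K.Nonempty) (hK : IsCompact K)
    (hw : latticeWidth u K = 0) :
    ∃ c : ℝ, K ⊆ {x : ℝ × ℝ | x.1 * u.1 + x.2 * u.2 = c} := by
  set f : ℝ × ℝ → ℝ := fun x => x.1 * u.1 + x.2 * u.2 with hf
  have himg : IsCompact (f '' K) := hK.image (phi_cont u)
  have hne : (f '' K).Nonempty := hKne.image f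
  refine ⟨sSup (f '' K), fun x hx => ?_⟩
  have h1 : f x ≤ sSup (f '' K) := le_csSup himg.bddAbove ⟨x, hx, rfl⟩
  have h2 : sInf (f '' K) ≤ f x := csInf_le himg.bddBelow ⟨x, hx, rfl⟩
  have h3 : sSup (f '' K) = sInf (f '' K) := by
    have := hw
    rw [latticeWidth] at this
    linarith [this]
  simp only [Set.mem_setOf_eq]
  have : f x = sSup (f '' K) := le_antisymm h1 (h3 ▸ h2)
  exact this

lemma seg_vol (p q : ℝ × ℝ) : volume (segment ℝ p q) = 0 := by
  have h1 : segment ℝ p q ⊆ (affineSpan ℝ ({p, q} : Set (ℝ × ℝ)) : Set (ℝ × ℝ)) := by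
    rw [← convexHull_pair]
    exact convexHull_subset_affineSpan _
  refine measure_mono_null h1 (Measure.addHaar_affineSubspace _ _ ?_)
  intro h
  have hd : (affineSpan ℝ ({p, q} : Set (ℝ × ℝ))).direction = ⊤ := by rw [h]; simp
  rw [direction_affineSpan, vectorSpan_pair] at hd
  by_cases hv : p -ᵥ q = 0
  · rw [hv, Submodule.span_zero_singleton] at hd
    exact absurd hd bot_ne_top
  · have h2 := finrank_span_singleton (K := ℝ) hv
    rw [hd, finrank_top] at h2
    have h3 : Module.finrank ℝ (ℝ × ℝ) = 2 := by
      rw [Module.finrank_prod, Module.finrank_self]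
    omega

lemma width_seg (u : ℤ × ℤ) (a : ℝ × ℝ) :
    latticeWidth u (segment ℝ 0 a) = |a.1 * u.1 + a.2 * u.2| := by
  have himg : (fun x : ℝ × ℝ => x.1 * u.1 + x.2 * u.2) '' segment ℝ 0 a
      = segment ℝ 0 (a.1 * u.1 + a.2 * u.2) := by
    have := image_segment (𝕜 := ℝ) (phi u).toAffineMap 0 a
    simpa [phi] using this
  rw [latticeWidth, himg, segment_eq_uIcc, Set.uIcc, csSup_Icc min_le_max, csInf_Icc min_le_max,
    max_sub_min_eq_abs]
  simp

lemma para_vol (a b : ℝ × ℝ) :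
    volume (segment ℝ 0 a + segment ℝ 0 b) = ENNReal.ofReal |a.1 * b.2 - a.2 * b.1| := by
  set T : (ℝ × ℝ) →ₗ[ℝ] ℝ × ℝ :=
    Matrix.toLin (Module.Basis.finTwoProd ℝ) (Module.Basis.finTwoProd ℝ) !![a.1, b.1; a.2, b.2] with hT
  have hTapp : ∀ x : ℝ × ℝ, T x = x.1 • a + x.2 • b := by
    intro x
    rw [hT, Matrix.toLin_finTwoProd_apply]
    simp [Prod.ext_iff, mul_comm]
  have hset : segment ℝ 0 a + segment ℝ 0 b = T '' Set.Icc (0, 0) (1, 1) := by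
    ext x
    simp only [Set.mem_add, Set.mem_image, Set.mem_Icc, segment_eq_image, Set.mem_Icc]
    constructor
    · rintro ⟨y, ⟨s, hs, rfl⟩, z, ⟨t, ht, rfl⟩, rfl⟩
      refine ⟨(s, t), ?_, ?_⟩
      · simpa [Prod.le_def] using ⟨⟨hs.1, ht.1⟩, hs.2, ht.2⟩
      · simp [hTapp]
    · rintro ⟨⟨s, t⟩, hst, rfl⟩
      simp only [Prod.le_def] at hst
      exact ⟨s • a, ⟨s, ⟨hst.1.1, hst.2.1⟩, by simp⟩, t • b,
        ⟨t, ⟨hst.1.2, hst.2.2⟩, by simp⟩, (hTapp (s, t)).symm⟩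
  have hdet : LinearMap.det T = a.1 * b.2 - a.2 * b.1 := by
    rw [hT, LinearMap.det_toLin, Matrix.det_fin_two_of]
    ring
  rw [hset, Measure.addHaar_image_linearMap, hdet]
  have hIcc : volume (Set.Icc ((0 : ℝ), (0 : ℝ)) (1, 1)) = 1 := by
    rw [Set.Icc_prod_eq, Measure.volume_eq_prod, Measure.prod_prod, Real.volume_Icc]
    norm_num
  rw [hIcc, mul_one]

lemma mixed_seg (a b : ℝ × ℝ) :
    mixedArea (segment ℝ 0 a) (segment ℝ 0 b) = |a.1 * b.2 - a.2 * b.1| := by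
  rw [mixedArea, para_vol, seg_vol, seg_vol]
  simp [ENNReal.toReal_ofReal (abs_nonneg _)]

end ContDiagAux

open ContDiagAux in
/-- The "continuous diagram": (i) if two nonempty compact convex sets both have width 0
in direction `u`, their mixed area is 0; (ii) every triple `(w₁,v,w₂)` of non-negative
reals with `w₁ + w₂ > 0` is realized by a pair of line segments. -/
theorem continuous_diagram (u : ℤ × ℤ) (hu : Int.gcd u.1 u.2 = 1) :
    (∀ K L : Set (ℝ × ℝ), K.Nonempty → L.Nonempty → IsCompact K → IsCompact L →
      Convex ℝ K → Convex ℝ L →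
      latticeWidth u K = 0 → latticeWidth u L = 0 → mixedArea K L = 0) ∧
    (∀ w₁ v w₂ : ℝ, 0 ≤ w₁ → 0 ≤ v → 0 ≤ w₂ → 0 < w₁ + w₂ →
      ∃ K L : Set (ℝ × ℝ),
        (∃ p q : ℝ × ℝ, K = segment ℝ p q) ∧ (∃ p q : ℝ × ℝ, L = segment ℝ p q) ∧
        K.Nonempty ∧ L.Nonempty ∧ IsCompact K ∧ IsCompact L ∧ Convex ℝ K ∧ Convex ℝ L ∧
        latticeWidth u K = w₁ ∧ mixedArea K L = v ∧ latticeWidth u L = w₂) := by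
  have huz : ¬((u.1 : ℝ) = 0 ∧ (u.2 : ℝ) = 0) := by
    rintro ⟨h1, h2⟩
    rw [Int.cast_eq_zero] at h1 h2
    rw [h1, h2] at hu
    simp at hu
  have hN : (0 : ℝ) < (u.1 : ℝ) ^ 2 + (u.2 : ℝ) ^ 2 := by
    rcases not_and_or.mp huz with h | h <;> positivity
  set N : ℝ := (u.1 : ℝ) ^ 2 + (u.2 : ℝ) ^ 2 with hNdef
  constructor
  · intro K L hKne hLne hK hL _ _ hwK hwL
    obtain ⟨c, hKc⟩ := width_zero_subset hKne hK hwK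
    obtain ⟨d, hLd⟩ := width_zero_subset hLne hL hwL
    have hvolK : volume K = 0 := measure_mono_null hKc (line_null u hu c)
    have hvolL : volume L = 0 := measure_mono_null hLd (line_null u hu d)
    have hsub : K + L ⊆ {x : ℝ × ℝ | x.1 * u.1 + x.2 * u.2 = c + d} := by
      rintro x hx
      rw [Set.mem_add] at hx
      obtain ⟨k, hk, l, hl, rfl⟩ := hx
      have h1 := hKc hk
      have h2 := hLd hl
      simp only [Set.mem_setOf_eq] at *
      simp only [Prod.fst_add, Prod.snd_add]
      ring_nf
      ring_nf at h1 h2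
      linarith
    have hvolKL : volume (K + L) = 0 := measure_mono_null hsub (line_null u hu (c + d))
    rw [mixedArea, hvolK, hvolL, hvolKL]
    simp
  · intro w₁ v w₂ hw₁ hv hw₂ hsum
    obtain ⟨s, t, hst⟩ : ∃ s t : ℝ, w₁ * t - w₂ * s = v := by
      rcases lt_or_eq_of_le hw₁ with h | h
      · exact ⟨0, v / w₁, by field_simp; ring⟩
      · have hw2 : 0 < w₂ := by linarith
        exact ⟨-(v / w₂), 0, by field_simp; ring⟩
    set a : ℝ × ℝ := (w₁ * u.1 / N - s * u.2, w₁ * u.2 / N + s * u.1) with ha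
    set b : ℝ × ℝ := (w₂ * u.1 / N - t * u.2, w₂ * u.2 / N + t * u.1) with hb
    have hfa : a.1 * u.1 + a.2 * u.2 = w₁ := by
      rw [ha]; field_simp; ring
    have hfb : b.1 * u.1 + b.2 * u.2 = w₂ := by
      rw [hb]; field_simp; ring
    have hdet : a.1 * b.2 - a.2 * b.1 = v := by
      rw [ha, hb, ← hst]
      field_simp
      ring
    refine ⟨segment ℝ 0 a, segment ℝ 0 b, ⟨0, a, rfl⟩, ⟨0, b, rfl⟩,
      ⟨0, left_mem_segment ℝ 0 a⟩, ⟨0, left_mem_segment ℝ 0 b⟩,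
      seg_compact 0 a, seg_compact 0 b, convex_segment 0 a, convex_segment 0 b,
      ?_, ?_, ?_⟩
    · rw [width_seg, hfa, abs_of_nonneg hw₁]
    · rw [mixed_seg, hdet, abs_of_nonneg hv]
    · rw [width_seg, hfb, abs_of_nonneg hw₂]
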